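/- Let $0 < \mu < \nu \le 1$ and $\epsilon > 0$ satisfy $(\epsilon+\nu)\mu > \nu$. Let $Q : \mathbb{N} \to \mathbb{R}_{>0}$ be a non-decreasing function with $Q(s) > e^{s^\mu}$ for all large $s$ and $Q(s) < e^{s^\nu}$ for all large $s$. Set $k = k(n) = \lceil n^\nu \rceil$ and $c = c(n) = \lceil n^\epsilon \rceil$. Then for all sufficiently large $n$ there exists $s$ with $n \le s \le n + (k-1)c$ such that $Q(s + c) \ge 3 Q(s)$. -/
import Mathlib


open Filter

/-- Lemma 4.3 of the paper (pigeonhole on growth blocks).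
With `k = ⌈n^ν⌉` and `c = ⌈n^ε⌉`, for all large `n` there is
`s ∈ [n, n + (k-1)c]` with `Q(s+c) ≥ 3 Q(s)`. -/
theorem stmt_8 (μ ν ε : ℝ) (hμ : 0 < μ) (hμν : μ < ν) (hν : ν ≤ 1) (hε : 0 < ε)
    (hmain : (ε + ν) * μ > ν)
    (Q : ℕ → ℝ) (hQpos : ∀ s, 0 < Q s) (hQmono : Monotone Q)
    (hlow : ∀ᶠ s : ℕ in atTop, Real.exp ((s : ℝ) ^ μ) < Q s)
    (hup : ∀ᶠ s : ℕ in atTop, Q s < Real.exp ((s : ℝ) ^ ν)) :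
    ∀ᶠ n : ℕ in atTop,
      ∃ s : ℕ, n ≤ s ∧ s ≤ n + (⌈(n : ℝ) ^ ν⌉₊ - 1) * ⌈(n : ℝ) ^ ε⌉₊ ∧
        3 * Q s ≤ Q (s + ⌈(n : ℝ) ^ ε⌉₊) := by
  rw [eventually_atTop] at hlow hup
  obtain ⟨N1, h1⟩ := hlow
  obtain ⟨N2, h2⟩ := hup
  have hgrow : ∀ᶠ n : ℕ in atTop,
      (2 * Real.log 3 + 1) < (n : ℝ) ^ ((ε + ν) * μ - ν) := by
    have ht : Filter.Tendsto (fun n : ℕ => (n : ℝ) ^ ((ε + ν) * μ - ν)) atTop atTop :=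
      (tendsto_rpow_atTop (by linarith)).comp tendsto_natCast_atTop_atTop
    exact ht.eventually_gt_atTop _
  filter_upwards [hgrow, eventually_ge_atTop N1, eventually_ge_atTop N2,
    eventually_ge_atTop 1] with n hg hN1 hN2 hn1
  by_contra hcon
  push_neg at hcon
  set k := ⌈(n : ℝ) ^ ν⌉₊ with hk
  set c := ⌈(n : ℝ) ^ ε⌉₊ with hc
  have hnpos : (0 : ℝ) < n := by exact_mod_cast hn1
  have hnν1 : (1 : ℝ) ≤ (n : ℝ) ^ ν := Real.one_le_rpow (by exact_mod_cast hn1) (by linarith)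
  have hnε0 : (0 : ℝ) ≤ (n : ℝ) ^ ε := Real.rpow_nonneg hnpos.le _
  have hlog3 : (0 : ℝ) < Real.log 3 := Real.log_pos (by norm_num)
  -- induction: Q (n + j*c) ≤ 3^j * Q n for j ≤ k
  have key : ∀ j, j ≤ k → Q (n + j * c) ≤ 3 ^ j * Q n := by
    intro j hj
    induction j with
    | zero => simp
    | succ j ih =>
      have ih' := ih (Nat.le_of_succ_le hj)
      have hstep : Q (n + j * c + c) < 3 * Q (n + j * c) := by
        apply hcon
        · exact Nat.le_add_right _ _
        · have : j ≤ k - 1 := by omega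
          exact Nat.add_le_add_left (Nat.mul_le_mul_right c this) n
      have heq : n + (j + 1) * c = n + j * c + c := by ring
      rw [heq]
      calc Q (n + j * c + c) ≤ 3 * Q (n + j * c) := hstep.le
        _ ≤ 3 * (3 ^ j * Q n) := by nlinarith [hQpos (n + j * c)]
        _ = 3 ^ (j + 1) * Q n := by ring
  have hQk := key k le_rfl
  -- numeric contradiction
  have hA : Real.exp (((n + k * c : ℕ) : ℝ) ^ μ) < Q (n + k * c) :=
    h1 _ (le_trans hN1 (Nat.le_add_right _ _))
  have hB : Q n < Real.exp ((n : ℝ) ^ ν) := h2 _ hN2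
  have hchain : Real.exp (((n + k * c : ℕ) : ℝ) ^ μ) <
      Real.exp ((k : ℝ) * Real.log 3 + (n : ℝ) ^ ν) := by
    have h3k : ((3 : ℝ)) ^ k = Real.exp ((k : ℝ) * Real.log 3) := by
      rw [Real.exp_nat_mul, Real.exp_log (by norm_num : (0:ℝ) < 3)]
    calc Real.exp (((n + k * c : ℕ) : ℝ) ^ μ) < Q (n + k * c) := hA
      _ ≤ 3 ^ k * Q n := hQk
      _ < 3 ^ k * Real.exp ((n : ℝ) ^ ν) := by
          have : (0:ℝ) < 3 ^ k := by positivity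
          nlinarith
      _ = Real.exp ((k : ℝ) * Real.log 3 + (n : ℝ) ^ ν) := by
          rw [h3k, ← Real.exp_add]
  have hlt := Real.exp_lt_exp.mp hchain
  -- lower bound on (n + k*c)^μ
  have hkc : (n : ℝ) ^ (ε + ν) ≤ ((n + k * c : ℕ) : ℝ) := by
    have h1' : (n : ℝ) ^ ν ≤ (k : ℝ) := Nat.le_ceil _
    have h2' : (n : ℝ) ^ ε ≤ (c : ℝ) := Nat.le_ceil _
    have : (n : ℝ) ^ (ε + ν) = (n : ℝ) ^ ε * (n : ℝ) ^ ν := Real.rpow_add hnpos ε ν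
    push_cast
    nlinarith
  have hlb : (n : ℝ) ^ ((ε + ν) * μ) ≤ ((n + k * c : ℕ) : ℝ) ^ μ := by
    rw [Real.rpow_mul hnpos.le]
    exact Real.rpow_le_rpow (Real.rpow_nonneg hnpos.le _) hkc hμ.le
  -- upper bound on k
  have hkub : (k : ℝ) ≤ 2 * (n : ℝ) ^ ν := by
    have := Nat.ceil_lt_add_one (Real.rpow_nonneg hnpos.le ν)
    rw [← hk] at this
    linarith
  have hfin : (n : ℝ) ^ ((ε + ν) * μ) = (n : ℝ) ^ ((ε + ν) * μ - ν) * (n : ℝ) ^ ν := by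
    rw [← Real.rpow_add hnpos]; ring_nf
  nlinarith [Real.rpow_nonneg hnpos.le ν]
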